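/- Let b ≥ 2 be an integer and T1, T2, T3 nonempty lists of integers ≥ 2 with tridiagonal discriminants d1, d2, d3 satisfying δ := 1/d1 + 1/d2 + 1/d3 > 1. Let di′ be the discriminant of Ti minus its last entry, and e := Σ di′/di. Consider the fork graph with a central vertex B of weight b joined to the last entry of each chain Ti. Define u_B = (δ − 1)/(b − e), and for the j-th vertex of Ti define u_{i,j} = (u_B·d(Ti,<j) + d(Ti,>j))/di, where Ti,<j and Ti,>j are the prefix before and suffix after position j of Ti. Then (u_B, (u_{i,j})) solves the adjunction system: for every vertex v of the fork, (weight of v)·u_v − Σ_{w adjacent to v} u_w = 2 − deg(v). -/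

import Mathlib

/-- The tridiagonal matrix with diagonal entries given by the list `T`
and entries `-1` on the sub- and super-diagonal. -/
def tridiagMatrix (T : List ℤ) : Matrix (Fin T.length) (Fin T.length) ℤ :=
  Matrix.of fun i j =>
    if i = j then T.get i
    else if (i : ℕ) + 1 = (j : ℕ) ∨ (j : ℕ) + 1 = (i : ℕ) then -1 else 0

/-- The discriminant of a chain `T`: the determinant of the associated tridiagonal
matrix (so the discriminant of the empty list is `1`). -/
def chainDisc (T : List ℤ) : ℤ := (tridiagMatrix T).det

theorem chainDisc_nil : chainDisc [] = 1 := by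
  simp [chainDisc, Matrix.det_fin_zero]

theorem chainDisc_singleton (a : ℤ) : chainDisc [a] = a := by
  simp [chainDisc, tridiagMatrix]

theorem tridiag_submatrix_succ (c : ℤ) (T : List ℤ) :
    (tridiagMatrix (c :: T)).submatrix Fin.succ Fin.succ = tridiagMatrix T := by
  ext i j
  simp only [Matrix.submatrix_apply, tridiagMatrix, Matrix.of_apply, Fin.succ_inj, Fin.val_succ]
  rcases eq_or_ne i j with h | h
  · subst h; simp [List.get_cons_succ]
  · simp only [if_neg h]
    have : (i : ℕ) + 1 + 1 = (j : ℕ) + 1 ∨ (j : ℕ) + 1 + 1 = (i : ℕ) + 1 ↔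
        (i : ℕ) + 1 = (j : ℕ) ∨ (j : ℕ) + 1 = (i : ℕ) := by omega
    exact if_congr this rfl rfl

theorem tridiag_minor2 (a b : ℤ) (L : List ℤ) :
    (tridiagMatrix (a :: b :: L)).submatrix (Fin.succ ∘ Fin.succ) (Fin.succAbove 1 ∘ Fin.succ) =
      tridiagMatrix L := by
  ext i j
  have hcol : Fin.succAbove 1 j.succ = j.succ.succ := by
    rw [← Fin.succ_zero_eq_one, Fin.succ_succAbove_succ, Fin.succAbove_zero]
  simp only [Matrix.submatrix_apply, Function.comp_apply, hcol, tridiagMatrix, Matrix.of_apply]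
  rcases eq_or_ne i j with h | h
  · subst h; simp
  · have h2 : i.succ.succ ≠ j.succ.succ := by simpa [Fin.succ_inj] using h
    rw [if_neg h2, if_neg h]
    have : ((i.succ.succ : Fin (L.length + 1 + 1)) : ℕ) + 1 = ((j.succ.succ : Fin (L.length + 1 + 1)) : ℕ) ∨
        ((j.succ.succ : Fin (L.length + 1 + 1)) : ℕ) + 1 = ((i.succ.succ : Fin (L.length + 1 + 1)) : ℕ) ↔
        (i : ℕ) + 1 = (j : ℕ) ∨ (j : ℕ) + 1 = (i : ℕ) := by
      simp only [Fin.val_succ]; omega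
    exact if_congr this rfl rfl

theorem chainDisc_cons_cons (a b : ℤ) (L : List ℤ) :
    chainDisc (a :: b :: L) = a * chainDisc (b :: L) - chainDisc L := by
  have hM := Matrix.det_succ_row_zero (n := L.length + 1) (tridiagMatrix (a :: b :: L))
  rw [Fin.sum_univ_succ, Fin.sum_univ_succ] at hM
  simp only [tridiagMatrix] at hM ⊢
  simp [Fin.succ_ne_zero, Fin.succAbove_zero, Fin.val_succ,
    (Fin.succ_ne_zero _).symm] at hM
  have hN := Matrix.det_succ_column_zero (n := L.length)
    ((Matrix.of fun i j => if i = j then (a :: b :: L).get i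
        else if (i : ℕ) + 1 = (j : ℕ) ∨ (j : ℕ) + 1 = (i : ℕ) then (-1:ℤ) else 0).submatrix
      Fin.succ (Fin.succAbove 1))
  rw [Fin.sum_univ_succ] at hN
  simp [Fin.succ_ne_zero, Fin.succAbove_zero, Fin.val_succ,
    (Fin.succ_ne_zero _).symm] at hN
  rw [hN] at hM
  change chainDisc (a :: b :: L) =
      a * ((tridiagMatrix (a :: b :: L)).submatrix Fin.succ Fin.succ).det +
        -(((tridiagMatrix (a :: b :: L)).submatrix (Fin.succ ∘ Fin.succ)
            (Fin.succAbove 1 ∘ Fin.succ)).det) at hM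
  rw [tridiag_submatrix_succ, tridiag_minor2] at hM
  rw [hM]
  show a * chainDisc (b :: L) + -chainDisc L = _
  ring

theorem chainDisc_concat : ∀ (L : List ℤ) (b a : ℤ),
    chainDisc (b :: L ++ [a]) = a * chainDisc (b :: L) - chainDisc ((b :: L).dropLast)
  | [], b, a => by
      show chainDisc [b, a] = a * chainDisc [b] - chainDisc [b].dropLast
      rw [chainDisc_cons_cons, chainDisc_singleton, chainDisc_singleton]
      show b * a - chainDisc [] = a * b - chainDisc []
      ring
  | [c], b, a => by
      show chainDisc [b, c, a] = a * chainDisc [b, c] - chainDisc [b]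
      rw [chainDisc_cons_cons, chainDisc_cons_cons, chainDisc_cons_cons,
        chainDisc_singleton, chainDisc_singleton, chainDisc_nil, chainDisc_singleton]
      ring
  | c :: d :: M, b, a => by
      have ih1 := chainDisc_concat (d :: M) c a
      have ih2 := chainDisc_concat M d a
      show chainDisc (b :: c :: ((d :: M) ++ [a])) = _
      rw [chainDisc_cons_cons b c ((d :: M) ++ [a])]
      rw [show (c :: ((d :: M) ++ [a])) = (c :: (d :: M) ++ [a]) from rfl] 
      rw [ih1, ih2]
      have hr : (b :: c :: d :: M).dropLast = b :: c :: (d :: M).dropLast := rfl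
      have hr2 : (c :: d :: M).dropLast = c :: (d :: M).dropLast := rfl
      rw [show chainDisc (b :: c :: d :: M) = b * chainDisc (c :: d :: M) - chainDisc (d :: M)
        from chainDisc_cons_cons _ _ _]
      rw [hr, hr2,
        show chainDisc (b :: c :: (d :: M).dropLast)
            = b * chainDisc (c :: (d :: M).dropLast) - chainDisc ((d :: M).dropLast)
          from chainDisc_cons_cons _ _ _]
      ring

theorem chainDisc_pos_lt (T : List ℤ) (hne : T ≠ []) (hT : ∀ x ∈ T, 2 ≤ x) :
    chainDisc T.dropLast < chainDisc T ∧ 0 < chainDisc T := by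
  induction T using List.reverseRecOn with
  | nil => exact absurd rfl hne
  | append_singleton L a ih =>
    have ha : (2:ℤ) ≤ a := hT a (by simp)
    rcases L with _ | ⟨b, L'⟩
    · constructor
      · show chainDisc ([a].dropLast) < chainDisc [a]
        rw [show [a].dropLast = ([] : List ℤ) from rfl, chainDisc_nil, chainDisc_singleton]
        omega
      · rw [show ([] : List ℤ) ++ [a] = [a] from rfl, chainDisc_singleton]; omega
    · have hTL : ∀ x ∈ b :: L', 2 ≤ x := fun x hx => hT x (List.mem_append_left [a] hx)
      obtain ⟨hlt, hpos⟩ := ih (by simp) hTL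
      have hdl : ((b :: L') ++ [a]).dropLast = b :: L' := List.dropLast_concat
      have hrec : chainDisc ((b :: L') ++ [a])
          = a * chainDisc (b :: L') - chainDisc ((b :: L').dropLast) :=
        chainDisc_concat L' b a
      rw [hdl, hrec]
      have h2 : 2 * chainDisc (b :: L') ≤ a * chainDisc (b :: L') :=
        mul_le_mul_of_nonneg_right ha hpos.le
      constructor <;> linarith

theorem chainDisc_take_rec (T : List ℤ) (i : ℕ) (h1 : 1 ≤ i) (h2 : i < T.length) :
    chainDisc (T.take (i+1)) = T.getD i 0 * chainDisc (T.take i) - chainDisc (T.take (i-1)) := by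
  have htake : T.take (i+1) = T.take i ++ [T.getD i 0] := by
    rw [List.take_succ, List.getD_eq_getElem _ _ h2, List.getElem?_eq_getElem h2]
    rfl
  obtain ⟨b, L', hbl⟩ : ∃ b L', T.take i = b :: L' :=
    List.exists_cons_of_ne_nil (List.ne_nil_of_length_pos (by rw [List.length_take]; omega))
  rw [htake, hbl, chainDisc_concat, ← hbl]
  have : (T.take i).dropLast = T.take (i-1) := by
    rw [List.dropLast_eq_take, List.length_take, List.take_take]
    congr 1
    omega
  rw [this]

theorem chainDisc_drop_rec (T : List ℤ) (i : ℕ) (h : i + 1 < T.length) :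
    chainDisc (T.drop i)
      = T.getD i 0 * chainDisc (T.drop (i+1)) - chainDisc (T.drop (i+1+1)) := by
  have h0 : i < T.length := by omega
  rw [List.drop_eq_getElem_cons h0, List.drop_eq_getElem_cons h, chainDisc_cons_cons,
    ← List.drop_eq_getElem_cons h, List.getD_eq_getElem _ _ h0]

/-- The candidate log discrepancy of the `j`-th vertex (1-indexed) of a twig `T` of a
fork whose branching component has log discrepancy `uB`:
`u_{i,j} = (uB·d(T_{<j}) + d(T_{>j})) / d(T)`. -/
def forkTwigLd (T : List ℤ) (uB : ℚ) (j : ℕ) : ℚ :=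
  (uB * (chainDisc (T.take (j - 1)) : ℚ) + (chainDisc (T.drop j) : ℚ)) / (chainDisc T : ℚ)

/-- The adjunction equations along a twig `T` of the fork, attached to the central
vertex via its last entry: for each `1 ≤ j ≤ n`,
`a_j·u_j − u_{j−1} − u_{j+1} = 2 − deg(j)`, where the "previous" value is `0` for
`j = 1` and the "next" value is `uB` (the central vertex) for `j = n`; the degree of
the `j`-th vertex is `(if j = 1 then 0 else 1) + 1`. -/
def TwigAdjunctionEqns (T : List ℤ) (uB : ℚ) (u : ℕ → ℚ) : Prop :=
  ∀ j, 1 ≤ j → j ≤ T.length →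
    (T.getD (j - 1) 0 : ℚ) * u j - (if j = 1 then 0 else u (j - 1)) -
        (if j = T.length then uB else u (j + 1)) =
      2 - ((if j = 1 then 0 else 1) + 1)

theorem forkTwigLd_length (T : List ℤ) (uB : ℚ) :
    forkTwigLd T uB T.length
      = (uB * (chainDisc T.dropLast : ℚ) + 1) / (chainDisc T : ℚ) := by
  rw [forkTwigLd, List.drop_length, ← List.dropLast_eq_take, chainDisc_nil]
  norm_num

theorem twigEqns (T : List ℤ) (hne : T ≠ []) (hT : ∀ x ∈ T, 2 ≤ x) (uB : ℚ) :
    TwigAdjunctionEqns T uB (forkTwigLd T uB) := by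
  intro j hj1 hjn
  obtain ⟨hlt, hpos⟩ := chainDisc_pos_lt T hne hT
  have hd0 : (chainDisc T : ℚ) ≠ 0 := by exact_mod_cast hpos.ne'
  rcases eq_or_ne j 1 with rfl | hj1'
  · rcases eq_or_ne T.length 1 with hlen | hlen
    · obtain ⟨a, rfl⟩ := List.length_eq_one_iff.mp hlen
      have ha : (2:ℤ) ≤ a := hT a (by simp)
      have ha0 : (a:ℚ) ≠ 0 := by exact_mod_cast (by omega : a ≠ 0)
      rw [if_pos rfl, if_pos hlen.symm]
      show (([a].getD 0 0 : ℤ) : ℚ) * forkTwigLd [a] uB 1 - 0 - uB = 2 - (0 + 1)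
      rw [show ([a].getD 0 0 : ℤ) = a from rfl]
      rw [forkTwigLd]
      rw [show ([a].take 0) = ([] : List ℤ) from rfl, show ([a].drop 1) = ([] : List ℤ) from rfl,
        chainDisc_nil, chainDisc_singleton]
      field_simp
      ring
    · rcases T with _ | ⟨a, _ | ⟨c, L⟩⟩
      · exact absurd rfl hne
      · exact absurd rfl hlen
      · have hlen2 : (a :: c :: L).length = L.length + 2 := rfl
        rw [if_pos rfl, if_neg (by omega)]
        have hrec : ((chainDisc (a :: c :: L) : ℤ) : ℚ)
            = (a:ℚ) * (chainDisc (c :: L) : ℚ) - (chainDisc L : ℚ) := by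
          exact_mod_cast chainDisc_cons_cons a c L
        show (((a :: c :: L).getD 0 0 : ℤ) : ℚ) * forkTwigLd (a :: c :: L) uB 1 - 0
            - forkTwigLd (a :: c :: L) uB 2 = 2 - (0 + 1)
        rw [show ((a :: c :: L).getD 0 0 : ℤ) = a from rfl]
        rw [forkTwigLd, forkTwigLd]
        rw [show ((a :: c :: L).take 0) = ([] : List ℤ) from rfl,
          show ((a :: c :: L).drop 1) = c :: L from rfl,
          show ((a :: c :: L).take 1) = [a] from rfl,
          show ((a :: c :: L).drop 2) = L from rfl,
          chainDisc_nil, chainDisc_singleton]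
        field_simp
        linear_combination -hrec
  · rcases eq_or_ne j T.length with rfl | hjn'
    · obtain ⟨L, a, rfl⟩ : ∃ L a, T = L ++ [a] := by
        rcases T.eq_nil_or_concat with h | ⟨L, a, h⟩
        · exact absurd h hne
        · exact ⟨L, a, by rw [h, List.concat_eq_append]⟩
      obtain ⟨b, L', rfl⟩ : ∃ b L', L = b :: L' := by
        apply List.exists_cons_of_ne_nil
        intro h
        subst h
        exact hj1' rfl
      have hlen : (b :: L' ++ [a]).length = L'.length + 2 := by simp
      have hd0' : ((chainDisc (b :: (L' ++ [a])) : ℤ) : ℚ) ≠ 0 := hd0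
      rw [if_neg hj1', if_pos rfl, if_neg hj1']
      rw [forkTwigLd_length, forkTwigLd, hlen]
      rw [show L'.length + 2 - 1 = L'.length + 1 from rfl,
        show L'.length + 1 - 1 = L'.length from rfl]
      have hgetD : ((b :: L' ++ [a]).getD (L'.length + 1) 0 : ℤ) = a := by
        rw [List.getD_eq_getElem _ _ (by simp)]
        exact List.getElem_concat_length (l := b :: L') (a := a) rfl _
      rw [hgetD]
      have e1 : (b :: L' ++ [a]).dropLast = b :: L' := List.dropLast_concat
      have e2 : (b :: L' ++ [a]).take L'.length = (b :: L').dropLast := by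
        rw [show b :: L' ++ [a] = (b :: L') ++ [a] from rfl,
          List.take_append_of_le_length (by simp), List.dropLast_eq_take,
          List.length_cons, Nat.add_sub_cancel]
      have e3 : (b :: L' ++ [a]).drop (L'.length + 1) = [a] :=
        List.drop_left (l₁ := b :: L') (l₂ := [a])
      rw [e1, e2, e3, chainDisc_singleton]
      have hrec : ((chainDisc (b :: L' ++ [a]) : ℤ) : ℚ)
          = (a:ℚ) * (chainDisc (b :: L') : ℚ) - (chainDisc ((b :: L').dropLast) : ℚ) := by
        exact_mod_cast chainDisc_concat L' b a
      simp only [List.cons_append] at hrec ⊢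
      field_simp [hd0']
      linear_combination -(uB * hrec)
    · obtain ⟨i, rfl⟩ : ∃ i, j = i + 1 := ⟨j - 1, by omega⟩
      have hi1 : 1 ≤ i := by omega
      have hi2 : i + 1 < T.length := by omega
      rw [if_neg hj1', if_neg hjn', if_neg hj1']
      have hrec1 : ((chainDisc (T.take (i+1)) : ℤ) : ℚ)
          = (T.getD i 0 : ℚ) * (chainDisc (T.take i) : ℚ)
            - (chainDisc (T.take (i-1)) : ℚ) := by
        exact_mod_cast chainDisc_take_rec T i hi1 (by omega)
      have hrec2 : ((chainDisc (T.drop i) : ℤ) : ℚ)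
          = (T.getD i 0 : ℚ) * (chainDisc (T.drop (i+1)) : ℚ)
            - (chainDisc (T.drop (i+1+1)) : ℚ) := by
        exact_mod_cast chainDisc_drop_rec T i hi2
      rw [show i + 1 - 1 = i from rfl]
      rw [forkTwigLd, forkTwigLd, forkTwigLd]
      rw [show i + 1 - 1 = i from rfl, show i + 1 + 1 - 1 = i + 1 from rfl]
      simp only [List.getD_eq_getElem?_getD] at hrec1 hrec2 ⊢
      field_simp [hd0]
      linear_combination -(uB * hrec1 + hrec2)

/-- **Log discrepancies of an admissible fork solve the adjunction system.**
Let `b ≥ 2` and let `T1, T2, T3` be nonempty lists of integers `≥ 2` with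
discriminants `d1, d2, d3` satisfying `δ = 1/d1 + 1/d2 + 1/d3 > 1`; let `di′` be the
discriminant of `Ti` minus its last entry and `e = Σ di′/di`.  Then
`u_B = (δ − 1)/(b − e)` together with `u_{i,j} = (u_B·d(T_{i,<j}) + d(T_{i,>j}))/di`
solves the adjunction system of the fork: the central vertex (weight `b`, degree `3`,
adjacent to the last vertex of each twig) satisfies
`b·u_B − (u_{1,n₁} + u_{2,n₂} + u_{3,n₃}) = 2 − 3`, and each twig satisfies its
adjunction equations. -/
theorem fork_log_discrepancies_adjunction (b : ℤ) (hb : 2 ≤ b)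
    (T1 T2 T3 : List ℤ) (h1ne : T1 ≠ []) (h2ne : T2 ≠ []) (h3ne : T3 ≠ [])
    (h1 : ∀ a ∈ T1, 2 ≤ a) (h2 : ∀ a ∈ T2, 2 ≤ a) (h3 : ∀ a ∈ T3, 2 ≤ a)
    (hδ : 1 < 1 / (chainDisc T1 : ℚ) + 1 / (chainDisc T2 : ℚ) + 1 / (chainDisc T3 : ℚ)) :
    let δ : ℚ := 1 / (chainDisc T1 : ℚ) + 1 / (chainDisc T2 : ℚ) + 1 / (chainDisc T3 : ℚ)
    let e : ℚ := (chainDisc T1.dropLast : ℚ) / (chainDisc T1 : ℚ) +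
      (chainDisc T2.dropLast : ℚ) / (chainDisc T2 : ℚ) +
      (chainDisc T3.dropLast : ℚ) / (chainDisc T3 : ℚ)
    let uB : ℚ := (δ - 1) / ((b : ℚ) - e)
    ((b : ℚ) * uB -
        (forkTwigLd T1 uB T1.length + forkTwigLd T2 uB T2.length +
          forkTwigLd T3 uB T3.length) = 2 - 3) ∧
      TwigAdjunctionEqns T1 uB (forkTwigLd T1 uB) ∧
      TwigAdjunctionEqns T2 uB (forkTwigLd T2 uB) ∧
      TwigAdjunctionEqns T3 uB (forkTwigLd T3 uB) := by
  intro δ e uB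
  obtain ⟨hlt1, hpos1⟩ := chainDisc_pos_lt T1 h1ne h1
  obtain ⟨hlt2, hpos2⟩ := chainDisc_pos_lt T2 h2ne h2
  obtain ⟨hlt3, hpos3⟩ := chainDisc_pos_lt T3 h3ne h3
  have hq1 : (0:ℚ) < (chainDisc T1 : ℚ) := by exact_mod_cast hpos1
  have hq2 : (0:ℚ) < (chainDisc T2 : ℚ) := by exact_mod_cast hpos2
  have hq3 : (0:ℚ) < (chainDisc T3 : ℚ) := by exact_mod_cast hpos3
  have hb2 : (2:ℚ) ≤ (b:ℚ) := by exact_mod_cast hb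
  have hbound : ∀ (S : List ℤ), chainDisc S.dropLast < chainDisc S → (0:ℚ) < (chainDisc S : ℚ) →
      (chainDisc S.dropLast : ℚ) / (chainDisc S : ℚ) ≤ 1 - 1 / (chainDisc S : ℚ) := by
    intro S hlt hq
    have h1 : (chainDisc S.dropLast : ℚ) ≤ (chainDisc S : ℚ) - 1 := by
      have : chainDisc S.dropLast ≤ chainDisc S - 1 := by omega
      exact_mod_cast this
    rw [div_le_iff₀ hq, sub_mul, one_mul, div_mul_cancel₀ _ hq.ne']
    linarith
  have he : e ≤ 3 - δ := by
    have b1 := hbound T1 hlt1 hq1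
    have b2 := hbound T2 hlt2 hq2
    have b3 := hbound T3 hlt3 hq3
    show (chainDisc T1.dropLast : ℚ) / (chainDisc T1 : ℚ) +
      (chainDisc T2.dropLast : ℚ) / (chainDisc T2 : ℚ) +
      (chainDisc T3.dropLast : ℚ) / (chainDisc T3 : ℚ) ≤ 3 -
        (1 / (chainDisc T1 : ℚ) + 1 / (chainDisc T2 : ℚ) + 1 / (chainDisc T3 : ℚ))
    linarith
  have hbe : (0:ℚ) < (b:ℚ) - e := by
    have : (1:ℚ) < δ := hδ
    linarith
  have key : uB * ((b:ℚ) - e) = δ - 1 := div_mul_cancel₀ _ hbe.ne'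
  refine ⟨?_, twigEqns T1 h1ne h1 uB, twigEqns T2 h2ne h2 uB, twigEqns T3 h3ne h3 uB⟩
  rw [forkTwigLd_length, forkTwigLd_length, forkTwigLd_length]
  have hedef : e = (chainDisc T1.dropLast : ℚ) / (chainDisc T1 : ℚ) +
      (chainDisc T2.dropLast : ℚ) / (chainDisc T2 : ℚ) +
      (chainDisc T3.dropLast : ℚ) / (chainDisc T3 : ℚ) := rfl
  have hδdef : δ = 1 / (chainDisc T1 : ℚ) + 1 / (chainDisc T2 : ℚ) + 1 / (chainDisc T3 : ℚ) := rfl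
  rw [hedef, hδdef] at key
  field_simp at key ⊢
  linear_combination key
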